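/- If f : (0,∞) → ℝ is differentiable at x > 0 and α ∈ (0,1], then the conformable derivative (T_α f)(x) exists and equals x^(1-α)·f'(x). -/

import Mathlib

open Real Filter

/-- If `f` is differentiable at `x > 0` and `α ∈ (0,1]`, then the conformable
derivative `(T_α f)(x)` exists and equals `x^(1-α) * f'(x)`. -/
theorem conformable_deriv_of_differentiable (α x : ℝ) (f f' : ℝ → ℝ)
    (hα : 0 < α) (hα1 : α ≤ 1) (hx : 0 < x) (hf : HasDerivAt f (f' x) x) :
    Tendsto (fun ε : ℝ => (f (x + ε * x ^ (1 - α)) - f x) / ε)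
      (nhdsWithin 0 {0}ᶜ) (nhds (x ^ (1 - α) * f' x)) := by
  set c := x ^ (1 - α) with hc
  have h2 : HasDerivAt (fun ε : ℝ => x + ε * c) c 0 := by
    simpa using ((hasDerivAt_id (0:ℝ)).mul_const c).const_add x
  have hf' : HasDerivAt f (f' x) ((fun ε : ℝ => x + ε * c) 0) := by
    simpa using hf
  have h : HasDerivAt (fun ε : ℝ => f (x + ε * c)) (c * f' x) 0 := by
    rw [mul_comm c]; exact hf'.comp 0 h2
  have := hasDerivAt_iff_tendsto_slope.mp h
  refine this.congr fun ε => ?_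
  simp [slope_def_field, div_eq_div_iff]
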